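/- Let Y be a compact metrizable topological space and let μ and ν be finite Borel measures on Y that are mutually singular. If T : L²(Y,μ) → L²(Y,ν) is a bounded linear map intertwining the multiplication actions of C(Y), i.e. T(f·ξ) = f·T(ξ) for every continuous function f on Y and every ξ ∈ L²(Y,μ), then T = 0. In other words, the multiplication representations of C(Y) on L²(Y,μ) and L²(Y,ν) are disjoint. -/

import Mathlib

open MeasureTheory
open Set

/-- Let `Y` be a compact metrizable space and `μ`, `ν` finite Borel measures on `Y` that are
mutually singular.  Any bounded linear map `T : L²(Y,μ) → L²(Y,ν)` intertwining the
multiplication actions of `C(Y)` vanishes: the multiplication representations of `C(Y)` on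
`L²(Y,μ)` and `L²(Y,ν)` are disjoint. -/
theorem disjoint_representations_of_mutuallySingular {Y : Type*} [TopologicalSpace Y]
    [CompactSpace Y] [TopologicalSpace.MetrizableSpace Y] [MeasurableSpace Y] [BorelSpace Y]
    (μ ν : Measure Y) [IsFiniteMeasure μ] [IsFiniteMeasure ν]
    (hsing : μ.MutuallySingular ν)
    (T : Lp ℂ 2 μ →L[ℂ] Lp ℂ 2 ν)
    (hT : ∀ (f : C(Y, ℂ)) (ξ η : Lp ℂ 2 μ),
      (η : Y → ℂ) =ᵐ[μ] (fun y => f y * (ξ : Y → ℂ) y) →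
      (T η : Y → ℂ) =ᵐ[ν] (fun y => f y * (T ξ : Y → ℂ) y)) :
    T = 0 := by
  letI : MetricSpace Y := TopologicalSpace.metrizableSpaceMetric Y
  refine ContinuousLinearMap.ext fun ξ => ?_
  rw [ContinuousLinearMap.zero_apply, ← norm_eq_zero]
  have key : ∀ ε : ℝ, 0 < ε → ‖T ξ‖ ≤ ε := by
    intro ε hε
    obtain ⟨S, hSm, hμS, hνS⟩ := hsing
    set c : ℝ := ‖T‖ + 1 with hc
    have hcpos : (0:ℝ) < c := by positivity
    obtain ⟨δ₁, hδ₁pos, hδ₁⟩ := (Lp.memLp ξ).eLpNorm_indicator_le one_le_two ENNReal.ofNat_ne_top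
      (show (0:ℝ) < ε / (2 * c) by positivity)
    obtain ⟨δ₂, hδ₂pos, hδ₂⟩ := (Lp.memLp (T ξ)).eLpNorm_indicator_le one_le_two
      ENNReal.ofNat_ne_top (show (0:ℝ) < ε / 2 by positivity)
    -- compact K inside Sᶜ almost full for μ
    obtain ⟨K, hKS, hK, hKd⟩ := hSm.compl.exists_isCompact_diff_lt (measure_ne_top μ _)
      (show ENNReal.ofReal δ₁ ≠ 0 from (ENNReal.ofReal_pos.mpr hδ₁pos).ne')
    have hμKc : μ Kᶜ ≤ ENNReal.ofReal δ₁ := by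
      have hsub : Kᶜ ⊆ S ∪ (Sᶜ \ K) := by
        intro y hy
        by_cases h : y ∈ S
        · exact Or.inl h
        · exact Or.inr ⟨h, hy⟩
      calc μ Kᶜ ≤ μ (S ∪ (Sᶜ \ K)) := measure_mono hsub
        _ ≤ μ S + μ (Sᶜ \ K) := measure_union_le _ _
        _ ≤ 0 + ENNReal.ofReal δ₁ := add_le_add hμS.le hKd.le
        _ = ENNReal.ofReal δ₁ := by simp
    -- open U containing K with tiny ν measure
    have hνK : ν K < ENNReal.ofReal δ₂ := by
      have : ν K = 0 := measure_mono_null hKS hνS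
      rw [this]
      exact ENNReal.ofReal_pos.mpr hδ₂pos
    obtain ⟨U, hKU, hUo, hνU⟩ := K.exists_isOpen_lt_of_lt _ hνK
    -- Urysohn function: 0 on Uᶜ, 1 on K
    obtain ⟨f, hf0, hf1, hf01⟩ := exists_continuous_zero_one_of_isCompact
      hUo.isClosed_compl.isCompact hK.isClosed
      (Set.disjoint_left.mpr fun y hyUc hyK => hyUc (hKU hyK))
    set fc : C(Y, ℂ) := ⟨fun y => (f y : ℂ), Complex.continuous_ofReal.comp f.continuous⟩ with hfc
    have hg : MemLp (fun y => fc y * (ξ : Y → ℂ) y) 2 μ := by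
      refine MemLp.of_le (Lp.memLp ξ)
        ((fc.continuous.aestronglyMeasurable).mul (Lp.aestronglyMeasurable ξ)) ?_
      filter_upwards with y
      rw [norm_mul]
      have : ‖fc y‖ ≤ 1 := by
        simp only [hfc, ContinuousMap.coe_mk, Complex.norm_real, Real.norm_eq_abs]
        rw [abs_of_nonneg (hf01 y).1]
        exact (hf01 y).2
      calc ‖fc y‖ * ‖(ξ : Y → ℂ) y‖ ≤ 1 * ‖(ξ : Y → ℂ) y‖ :=
            mul_le_mul_of_nonneg_right this (norm_nonneg _)
        _ = ‖(ξ : Y → ℂ) y‖ := one_mul _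
    set η : Lp ℂ 2 μ := hg.toLp _ with hηdef
    have hη : (η : Y → ℂ) =ᵐ[μ] fun y => fc y * (ξ : Y → ℂ) y := hg.coeFn_toLp
    have hTη := hT fc ξ η hη
    -- bound on ‖ξ - η‖
    have h1 : eLpNorm ((ξ : Y → ℂ) - (η : Y → ℂ)) 2 μ ≤ ENNReal.ofReal (ε / (2 * c)) := by
      have hae : ∀ᵐ y ∂μ, ‖((ξ : Y → ℂ) - (η : Y → ℂ)) y‖ ≤ ‖Kᶜ.indicator (ξ : Y → ℂ) y‖ := by
        filter_upwards [hη] with y hy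
        simp only [Pi.sub_apply, hy]
        by_cases hyK : y ∈ K
        · have : fc y = 1 := by
            simp only [hfc, ContinuousMap.coe_mk, hf1 hyK, Pi.one_apply, Complex.ofReal_one]
          simp [this]
        · rw [Set.indicator_of_mem (by exact hyK : y ∈ Kᶜ)]
          have : (ξ : Y → ℂ) y - fc y * (ξ : Y → ℂ) y = (1 - fc y) * (ξ : Y → ℂ) y := by ring
          rw [this, norm_mul]
          have hb : ‖1 - fc y‖ ≤ 1 := by
            simp only [hfc, ContinuousMap.coe_mk]
            rw [show (1 : ℂ) - (f y : ℂ) = ((1 - f y : ℝ) : ℂ) by push_cast; ring,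
              Complex.norm_real, Real.norm_eq_abs, abs_of_nonneg (by linarith [(hf01 y).2])]
            linarith [(hf01 y).1]
          calc ‖1 - fc y‖ * ‖(ξ : Y → ℂ) y‖ ≤ 1 * ‖(ξ : Y → ℂ) y‖ :=
                mul_le_mul_of_nonneg_right hb (norm_nonneg _)
            _ = ‖(ξ : Y → ℂ) y‖ := one_mul _
      exact (eLpNorm_mono_ae hae).trans
        (hδ₁ Kᶜ hK.isClosed.measurableSet.compl hμKc)
    have hnorm1 : ‖ξ - η‖ ≤ ε / (2 * c) := by
      rw [Lp.norm_def]
      apply ENNReal.toReal_le_of_le_ofReal (by positivity)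
      rw [eLpNorm_congr_ae (Lp.coeFn_sub ξ η)]
      exact h1
    -- bound on ‖T η‖
    have hnorm2 : ‖T η‖ ≤ ε / 2 := by
      rw [Lp.norm_def]
      apply ENNReal.toReal_le_of_le_ofReal (by positivity)
      have h2 : eLpNorm (T η : Y → ℂ) 2 ν ≤ eLpNorm (U.indicator (T ξ : Y → ℂ)) 2 ν := by
        apply eLpNorm_mono_ae
        filter_upwards [hTη] with y hy
        rw [hy]
        by_cases hyU : y ∈ U
        · rw [Set.indicator_of_mem hyU, norm_mul]
          have : ‖fc y‖ ≤ 1 := by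
            simp only [hfc, ContinuousMap.coe_mk, Complex.norm_real, Real.norm_eq_abs]
            rw [abs_of_nonneg (hf01 y).1]
            exact (hf01 y).2
          calc ‖fc y‖ * ‖(T ξ : Y → ℂ) y‖ ≤ 1 * ‖(T ξ : Y → ℂ) y‖ :=
                mul_le_mul_of_nonneg_right this (norm_nonneg _)
            _ = ‖(T ξ : Y → ℂ) y‖ := one_mul _
        · have : fc y = 0 := by
            simp only [hfc, ContinuousMap.coe_mk, hf0 (by exact hyU : y ∈ Uᶜ), Pi.zero_apply,
              Complex.ofReal_zero]
          simp [this]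
      exact h2.trans (hδ₂ U hUo.measurableSet hνU.le)
    -- combine
    have hξ : ξ = η + (ξ - η) := by abel
    calc ‖T ξ‖ = ‖T η + T (ξ - η)‖ := by rw [← map_add]; exact congrArg _ (congrArg _ hξ)
      _ ≤ ‖T η‖ + ‖T (ξ - η)‖ := norm_add_le _ _
      _ ≤ ε / 2 + ‖T‖ * ‖ξ - η‖ := add_le_add hnorm2 (T.le_opNorm _)
      _ ≤ ε / 2 + c * (ε / (2 * c)) := by
          refine add_le_add_right (mul_le_mul (by linarith [norm_nonneg T]) hnorm1
            (norm_nonneg _) hcpos.le) _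
      _ = ε := by field_simp; ring
  exact le_antisymm (le_of_forall_pos_le_add (by intro δ hδ; simpa using key δ hδ))
    (norm_nonneg _)
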